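/- In Hecke column insertion into decreasing tableaux, the Pieri property holds: if x_1 is Hecke-inserted into a decreasing tableau T ending at box c_1, and then x_2 is Hecke-inserted into the result ending at box c_2, then c_2 is strictly to the right of c_1 if and only if x_1 < x_2. -/

import Mathlib

open scoped Classical

noncomputable section

/-- A decreasing tableau, represented by its list of columns (each column listed
top to bottom): entries strictly decrease down each column, column lengths weakly
decrease left to right, and entries strictly decrease along rows left to right. -/
def IsDecTab (T : List (List ℕ)) : Prop :=
  (∀ col ∈ T, List.Chain' (· > ·) col) ∧
  List.Chain' (fun C D : List ℕ => D.length ≤ C.length ∧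
    ∀ r : ℕ, r < D.length → D.getD r 0 < C.getD r 0) T

/-- Replace column `c` of `T` by `C` (appending a new column if `c = T.length`). -/
def setCol (T : List (List ℕ)) (c : ℕ) (C : List ℕ) : List (List ℕ) :=
  if c < T.length then T.set c C else T ++ [C]

/-- The column index of the rightmost box in row `r` of `T`. -/
def rowEnd (T : List (List ℕ)) (r : ℕ) : ℕ :=
  (T.filter (fun col => decide (r < col.length))).length - 1

/-- Hecke column insertion of `x` into the decreasing tableau `T`, starting at
column `c` (fuelled recursion; the fuel is always sufficient when it is larger than
the number of columns).  Returns the resulting tableau, the (column index of the)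
box where the insertion ends, and whether a new box was added.

At each column: if `x` is `≤` all entries of the column, no number is output; `x`
is appended at the bottom of the column if the result is a decreasing tableau (the
new box is the ending box), and otherwise the tableau is unchanged and the ending
box is the rightmost box of the row containing the bottom entry of the column.
Otherwise `x` bumps the entry `y < x` of the column whose replacement by `x` could
keep the column decreasing (the largest entry `< x`); `y` is replaced by `x`
provided the result is still a decreasing tableau, and `y` is inserted into the
next column. -/
def heckeGo : ℕ → List (List ℕ) → ℕ → ℕ → List (List ℕ) × ℕ × Bool
  | 0, T, c, _ => (T, c, false)
  | fuel + 1, T, c, x =>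
    let C := T.getD c []
    if ∀ y ∈ C, x ≤ y then
      let T' := setCol T c (C ++ [x])
      if IsDecTab T' then (T', c, true)
      else (T, rowEnd T (C.length - 1), false)
    else
      let y := (C.filter (fun z => decide (z < x))).foldr max 0
      let C' := C.map (fun z => if z = y then x else z)
      let T' := if IsDecTab (T.set c C') then T.set c C' else T
      heckeGo fuel T' (c + 1) y

/-- Hecke column insertion of `x` into the decreasing tableau `T`. -/
def heckeInsert (T : List (List ℕ)) (x : ℕ) : List (List ℕ) × ℕ × Bool :=
  heckeGo (T.length + 2) T 0 x

/-! ### Basic access functions -/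

def colL (T : List (List ℕ)) (c : ℕ) : List ℕ := T.getD c []
def colLen (T : List (List ℕ)) (c : ℕ) : ℕ := (colL T c).length
def ent (T : List (List ℕ)) (c r : ℕ) : ℕ := (colL T c).getD r 0

lemma colL_of_ge {T : List (List ℕ)} {c : ℕ} (h : T.length ≤ c) : colL T c = [] :=
  List.getD_eq_default _ _ h

lemma colLen_pos_lt {T : List (List ℕ)} {c : ℕ} (h : 0 < colLen T c) : c < T.length := by
  by_contra hc
  have : colL T c = [] := colL_of_ge (by omega)
  simp [colLen, this] at h

/-- Structural characterization of `IsDecTab` in terms of `colLen` and `ent`. -/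
lemma isDecTab_iff (T : List (List ℕ)) : IsDecTab T ↔
    ((∀ c r, r + 1 < colLen T c → ent T c (r+1) < ent T c r) ∧
     (∀ c, colLen T (c+1) ≤ colLen T c) ∧
     (∀ c r, r < colLen T (c+1) → ent T (c+1) r < ent T c r)) := by
  constructor
  · rintro ⟨h1, h2⟩
    rw [List.Chain', List.isChain_iff_getElem] at h2
    refine ⟨?_, ?_, ?_⟩
    · intro c r hr
      have hc : c < T.length := colLen_pos_lt (by omega)
      have hcol := h1 (T.get ⟨c, hc⟩) (T.get_mem _)
      rw [List.Chain', List.isChain_iff_getElem] at hcol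
      have hcl : colL T c = T.get ⟨c, hc⟩ := List.getD_eq_get _ _ ⟨c, hc⟩
      simp only [colLen, hcl] at hr
      have h5 := hcol r (by omega)
      simp only [ent, hcl]
      rw [List.getD_eq_getElem _ _ (by omega : r + 1 < (T.get ⟨c, hc⟩).length),
          List.getD_eq_getElem _ _ (by omega : r < (T.get ⟨c, hc⟩).length)]
      exact h5
    · intro c
      by_cases hc1 : c + 1 < T.length
      · have h5 := (h2 c (by omega)).1
        have hcl : colL T c = T.get ⟨c, by omega⟩ := List.getD_eq_get _ _ ⟨c, by omega⟩
        have hcl1 : colL T (c+1) = T.get ⟨c+1, hc1⟩ := List.getD_eq_get _ _ ⟨c+1, hc1⟩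
        simpa [colLen, hcl, hcl1] using h5
      · have : colL T (c+1) = [] := colL_of_ge (by omega)
        simp [colLen, this]
    · intro c r hr
      have hc1 : c + 1 < T.length := colLen_pos_lt (by omega)
      have h5 := (h2 c (by omega)).2 r
      have hcl : colL T c = T.get ⟨c, by omega⟩ := List.getD_eq_get _ _ ⟨c, by omega⟩
      have hcl1 : colL T (c+1) = T.get ⟨c+1, hc1⟩ := List.getD_eq_get _ _ ⟨c+1, hc1⟩
      simp only [colLen, hcl1] at hr
      simpa [ent, hcl, hcl1] using h5 hr
  · rintro ⟨h1, h2, h3⟩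
    constructor
    · intro col hcol
      obtain ⟨⟨c, hc⟩, rfl⟩ := List.mem_iff_get.mp hcol
      rw [List.Chain', List.isChain_iff_getElem]
      intro i hi
      have hcl : colL T c = T.get ⟨c, hc⟩ := List.getD_eq_get _ _ ⟨c, hc⟩
      have h5 := h1 c i (by simp only [colLen, hcl]; omega)
      simp only [ent, hcl] at h5
      rw [List.getD_eq_getElem _ _ (by omega : i + 1 < (T.get ⟨c, hc⟩).length),
          List.getD_eq_getElem _ _ (by omega : i < (T.get ⟨c, hc⟩).length)] at h5
      exact h5
    · rw [List.Chain', List.isChain_iff_getElem]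
      intro i hi
      have hcl : colL T i = T.get ⟨i, by omega⟩ := List.getD_eq_get _ _ ⟨i, by omega⟩
      have hcl1 : colL T (i+1) = T.get ⟨i+1, by omega⟩ := List.getD_eq_get _ _ ⟨i+1, by omega⟩
      constructor
      · have h5 := h2 i; simpa [colLen, hcl, hcl1] using h5
      · intro r hr
        have h5 := h3 i r (by simp only [colLen, hcl1]; omega)
        simpa [ent, hcl, hcl1] using h5
/-! ### List helper lemmas -/

lemma getD_set (l : List ℕ) (r r' x : ℕ) :
    (l.set r x).getD r' 0 = if r' = r ∧ r < l.length then x else l.getD r' 0 := by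
  rcases Nat.lt_or_ge r' l.length with h | h
  · rw [List.getD_eq_getElem _ _ (by rw [List.length_set]; exact h), List.getD_eq_getElem _ _ h]
    rw [List.getElem_set]
    split_ifs with h1 h2 h3 <;> first | rfl | omega
  · rw [List.getD_eq_default _ _ (by rw [List.length_set]; exact h), List.getD_eq_default _ _ h]
    split_ifs with h1 <;> [omega; rfl]

lemma mem_iff_getD {l : List ℕ} {z : ℕ} : z ∈ l ↔ ∃ r < l.length, l.getD r 0 = z := by
  constructor
  · intro hz
    obtain ⟨⟨r, hr⟩, rfl⟩ := List.mem_iff_get.mp hz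
    exact ⟨r, hr, List.getD_eq_get _ _ ⟨r, hr⟩⟩
  · rintro ⟨r, hr, rfl⟩
    rw [List.getD_eq_getElem _ _ hr]; exact List.getElem_mem _

lemma foldr_max_mem : ∀ (l : List ℕ), l ≠ [] → l.foldr max 0 ∈ l
  | [a], _ => by simp
  | a :: b :: t, _ => by
    have ih := foldr_max_mem (b :: t) (by simp)
    rw [List.foldr_cons]
    rcases Nat.le_total a ((b::t).foldr max 0) with h | h
    · rw [max_eq_right h]; exact List.mem_cons_of_mem _ ih
    · rw [max_eq_left h]; exact List.mem_cons_self

lemma le_foldr_max {l : List ℕ} {z : ℕ} (hz : z ∈ l) : z ≤ l.foldr max 0 := by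
  induction l with
  | nil => simp at hz
  | cons a t ih =>
    rcases List.mem_cons.mp hz with rfl | hz
    · exact le_max_left _ _
    · exact le_trans (ih hz) (le_max_right _ _)

lemma map_eq_set {l : List ℕ} (hl : List.Chain' (· > ·) l) {r x y : ℕ} (hr : r < l.length)
    (hy : l.getD r 0 = y) :
    l.map (fun z => if z = y then x else z) = l.set r x := by
  have hpw := List.isChain_iff_pairwise.mp hl
  rw [List.pairwise_iff_get] at hpw
  apply List.ext_getElem (by simp)
  intro i hi hi'
  rw [List.getD_eq_getElem _ _ hr] at hy
  simp only [List.length_map] at hi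
  rw [List.getElem_map, List.getElem_set]
  by_cases hir : r = i
  · subst hir
    rw [hy, if_pos rfl, if_pos rfl]
  · have hne : l[i] ≠ y := by
      subst hy
      have hi2 : i < l.length := by simpa using hi
      rcases Nat.lt_or_ge i r with h | h
      · have := hpw ⟨i, hi2⟩ ⟨r, hr⟩ (by simpa using h)
        simp only [List.get_eq_getElem] at this
        omega
      · have := hpw ⟨r, hr⟩ ⟨i, hi2⟩ (by simp; omega)
        simp only [List.get_eq_getElem] at this
        omega
    rw [if_neg hne, if_neg hir]
/-! ### Derived facts about decreasing tableaux -/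

lemma IsDecTab.col {T : List (List ℕ)} (hT : IsDecTab T) :
    ∀ c r, r + 1 < colLen T c → ent T c (r+1) < ent T c r := ((isDecTab_iff T).mp hT).1
lemma IsDecTab.len {T : List (List ℕ)} (hT : IsDecTab T) :
    ∀ c, colLen T (c+1) ≤ colLen T c := ((isDecTab_iff T).mp hT).2.1
lemma IsDecTab.row {T : List (List ℕ)} (hT : IsDecTab T) :
    ∀ c r, r < colLen T (c+1) → ent T (c+1) r < ent T c r := ((isDecTab_iff T).mp hT).2.2

/-- Entries strictly decrease down a column (non-adjacent version). -/
lemma IsDecTab.col' {T : List (List ℕ)} (hT : IsDecTab T) {c r r' : ℕ} (hrr : r' < r)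
    (hr : r < colLen T c) : ent T c r < ent T c r' := by
  induction r with
  | zero => omega
  | succ n ih =>
    rcases Nat.lt_or_ge r' n with h | h
    · exact lt_trans (hT.col c n hr) (ih h (by omega))
    · have : r' = n := by omega
      subst this; exact hT.col c r' hr

lemma IsDecTab.col'' {T : List (List ℕ)} (hT : IsDecTab T) {c r r' : ℕ} (hrr : r' ≤ r)
    (hr : r < colLen T c) : ent T c r ≤ ent T c r' := by
  rcases Nat.lt_or_ge r' r with h | h
  · exact le_of_lt (hT.col' h hr)
  · have : r' = r := by omega
    subst this; rfl

/-- Column lengths weakly decrease (non-adjacent version). -/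
lemma IsDecTab.len' {T : List (List ℕ)} (hT : IsDecTab T) {c c' : ℕ} (hcc : c ≤ c') :
    colLen T c' ≤ colLen T c := by
  induction c' with
  | zero => have : c = 0 := by omega
            subst this; rfl
  | succ n ih =>
    rcases Nat.lt_or_ge c n.succ with h | h
    · exact le_trans (hT.len n) (ih (by omega))
    · have : c = n + 1 := by omega
      subst this; rfl

/-- Row entries strictly decrease rightwards (non-adjacent version). -/
lemma IsDecTab.row' {T : List (List ℕ)} (hT : IsDecTab T) {c c' r : ℕ} (hcc : c < c')
    (hr : r < colLen T c') : ent T c' r < ent T c r := by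
  induction c' with
  | zero => omega
  | succ n ih =>
    rcases Nat.lt_or_ge c n with h | h
    · exact lt_trans (hT.row n r hr) (ih h (lt_of_lt_of_le hr (hT.len n)))
    · have : c = n := by omega
      subst this; exact hT.row c r hr

lemma mem_colL_iff {T : List (List ℕ)} {c z : ℕ} :
    z ∈ colL T c ↔ ∃ r < colLen T c, ent T c r = z := mem_iff_getD

/-! ### Columns of modified tableaux -/

lemma colL_set {T : List (List ℕ)} {c : ℕ} (hc : c < T.length) (C : List ℕ) (j : ℕ) :
    colL (T.set c C) j = if j = c then C else colL T j := by
  unfold colL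
  split_ifs with h
  · subst h
    rw [List.getD_eq_getElem _ _ (by rw [List.length_set]; exact hc)]
    simp [List.getElem_set]
  · rcases Nat.lt_or_ge j T.length with h2 | h2
    · rw [List.getD_eq_getElem _ _ (by rw [List.length_set]; exact h2),
        List.getD_eq_getElem _ _ h2]
      rw [List.getElem_set, if_neg (fun hh => h hh.symm)]
    · rw [List.getD_eq_default _ _ (by rw [List.length_set]; exact h2),
        List.getD_eq_default _ _ h2]

lemma colL_setCol {T : List (List ℕ)} {c : ℕ} (hc : c ≤ T.length) (C : List ℕ) (j : ℕ) :
    colL (setCol T c C) j = if j = c then C else colL T j := by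
  unfold setCol
  rcases Nat.lt_or_ge c T.length with h | h
  · rw [if_pos h]; exact colL_set h C j
  · have hceq : c = T.length := by omega
    rw [if_neg (by omega)]
    unfold colL
    split_ifs with h1
    · subst h1
      rw [List.getD_eq_getElem _ _ (by simp [hceq])]
      subst hceq
      simp
    · rcases Nat.lt_or_ge j T.length with h2 | h2
      · rw [List.getD_eq_getElem _ _ (by simp; omega), List.getD_eq_getElem _ _ h2]
        exact List.getElem_append_left h2
      · rw [List.getD_eq_default _ _ (by simp; omega), List.getD_eq_default _ _ h2]

lemma length_set' (T : List (List ℕ)) (c : ℕ) (C : List ℕ) :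
    (T.set c C).length = T.length := List.length_set

lemma length_setCol {T : List (List ℕ)} {c : ℕ} (C : List ℕ) :
    (setCol T c C).length = if c < T.length then T.length else T.length + 1 := by
  unfold setCol
  split_ifs <;> simp
/-! ### Validity of modifications -/

/-- Replacing the entry at `(c, r)` by a larger value `x` keeps the tableau
decreasing, under local conditions. -/
lemma isDecTab_set_entry {T : List (List ℕ)} (hT : IsDecTab T) {c r x : ℕ}
    (hr : r < colLen T c)
    (hgt : ent T c r < x)
    (habove : r = 0 ∨ x < ent T c (r-1))
    (hleft : c = 0 ∨ x < ent T (c-1) r)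
    (hright : r < colLen T (c+1) → ent T (c+1) r < x) :
    IsDecTab (T.set c ((colL T c).set r x)) := by
  have hc : c < T.length := colLen_pos_lt (by omega)
  rw [isDecTab_iff]
  have hL : ∀ j, colLen (T.set c ((colL T c).set r x)) j = colLen T j := by
    intro j
    unfold colLen
    rw [colL_set hc]
    split_ifs with h
    · subst h; simp [colLen]
    · rfl
  have hE : ∀ j r', ent (T.set c ((colL T c).set r x)) j r' =
      if j = c ∧ r' = r then x else ent T j r' := by
    intro j r'
    unfold ent
    rw [colL_set hc]
    by_cases h1 : j = c
    · subst h1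
      rw [if_pos rfl, getD_set]
      by_cases h2 : r' = r
      · rw [if_pos ⟨h2, hr⟩, if_pos ⟨rfl, h2⟩]
      · rw [if_neg (by tauto), if_neg (by tauto)]
    · rw [if_neg h1, if_neg (by tauto)]
  refine ⟨?_, ?_, ?_⟩
  · intro j r' h
    rw [hL] at h
    rw [hE, hE]
    by_cases hj : j = c
    · subst hj
      by_cases hA : r' + 1 = r
      · rw [if_pos (show j = j ∧ r' + 1 = r from ⟨rfl, hA⟩),
          if_neg (show ¬(j = j ∧ r' = r) by omega)]
        rcases habove with h3 | h3
        · omega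
        · have h4 : r' = r - 1 := by omega
          rw [h4]; exact h3
      · rw [if_neg (show ¬(j = j ∧ r' + 1 = r) by omega)]
        by_cases hB : r' = r
        · rw [if_pos (show j = j ∧ r' = r from ⟨rfl, hB⟩)]
          subst hB
          exact lt_trans (hT.col _ _ h) hgt
        · rw [if_neg (show ¬(j = j ∧ r' = r) by omega)]
          exact hT.col j r' h
    · rw [if_neg (show ¬(j = c ∧ r' + 1 = r) by tauto),
        if_neg (show ¬(j = c ∧ r' = r) by tauto)]
      exact hT.col j r' h
  · intro j; rw [hL, hL]; exact hT.len j
  · intro j r' h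
    rw [hL] at h
    rw [hE, hE]
    by_cases hj1 : j + 1 = c
    · have hj : j ≠ c := by omega
      rw [if_neg (show ¬(j = c ∧ r' = r) by tauto)]
      by_cases hB : r' = r
      · rw [if_pos (show j + 1 = c ∧ r' = r from ⟨hj1, hB⟩)]
        subst hB
        rcases hleft with h3 | h3
        · omega
        · have h4 : ent T (c-1) r' = ent T j r' := by rw [show c - 1 = j by omega]
          omega
      · rw [if_neg (show ¬(j + 1 = c ∧ r' = r) by tauto)]
        exact hT.row j r' h
    · by_cases hj : j = c
      · rw [if_neg (show ¬(j + 1 = c ∧ r' = r) by tauto)]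
        by_cases hB : r' = r
        · rw [if_pos (show j = c ∧ r' = r from ⟨hj, hB⟩)]
          subst hj; subst hB
          exact hright h
        · rw [if_neg (show ¬(j = c ∧ r' = r) by tauto)]
          exact hT.row j r' h
      · rw [if_neg (show ¬(j + 1 = c ∧ r' = r) by tauto),
          if_neg (show ¬(j = c ∧ r' = r) by tauto)]
        exact hT.row j r' h

/-- Appending `x` at the bottom of column `c` keeps the tableau decreasing,
under local conditions. -/
lemma isDecTab_setCol_app {T : List (List ℕ)} (hT : IsDecTab T) {c x : ℕ}
    (hc : c ≤ T.length)
    (hbot : colLen T c = 0 ∨ x < ent T c (colLen T c - 1))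
    (hleft : c = 0 ∨ (colLen T c < colLen T (c-1) ∧ x < ent T (c-1) (colLen T c))) :
    IsDecTab (setCol T c ((colL T c) ++ [x])) := by
  rw [isDecTab_iff]
  have hL : ∀ j, colLen (setCol T c ((colL T c) ++ [x])) j =
      if j = c then colLen T c + 1 else colLen T j := by
    intro j
    unfold colLen
    rw [colL_setCol hc]
    split_ifs with h
    · simp [colLen]
    · rfl
  have hE : ∀ j r', ent (setCol T c ((colL T c) ++ [x])) j r' =
      if j = c ∧ r' = colLen T c then x else ent T j r' := by
    intro j r'
    unfold ent
    rw [colL_setCol hc]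
    by_cases h1 : j = c
    · subst h1
      rw [if_pos rfl]
      by_cases h2 : r' = colLen T j
      · rw [if_pos ⟨rfl, h2⟩, h2,
          List.getD_eq_getElem _ _ (by simp [colLen])]
        have : colLen T j = (colL T j).length := rfl
        simp [this]
      · rw [if_neg (by tauto)]
        rcases Nat.lt_or_ge r' (colLen T j) with h4 | h4
        · rw [List.getD_eq_getElem _ _ (by simp [colLen] at h4 ⊢; omega),
            List.getD_eq_getElem _ _ h4]
          exact List.getElem_append_left h4
        · have h5 : colLen T j < r' := by omega
          rw [List.getD_eq_default _ _ (by simp [colLen] at h5 ⊢; omega),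
            List.getD_eq_default _ _ (by simp [colLen] at h5 ⊢; omega)]
    · rw [if_neg h1, if_neg (by tauto)]
  refine ⟨?_, ?_, ?_⟩
  · intro j r' h
    rw [hL] at h
    rw [hE, hE]
    by_cases hj : j = c
    · subst hj
      rw [if_pos rfl] at h
      by_cases hA : r' + 1 = colLen T j
      · rw [if_pos (show j = j ∧ r' + 1 = colLen T j from ⟨rfl, hA⟩),
          if_neg (show ¬(j = j ∧ r' = colLen T j) by omega)]
        rcases hbot with h3 | h3
        · omega
        · have h4 : r' = colLen T j - 1 := by omega
          rw [h4]; exact h3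
      · rw [if_neg (show ¬(j = j ∧ r' + 1 = colLen T j) by omega),
          if_neg (show ¬(j = j ∧ r' = colLen T j) by omega)]
        exact hT.col j r' (by omega)
    · rw [if_neg hj] at h
      rw [if_neg (show ¬(j = c ∧ r' + 1 = colLen T c) by tauto),
        if_neg (show ¬(j = c ∧ r' = colLen T c) by tauto)]
      exact hT.col j r' h
  · intro j
    rw [hL, hL]
    by_cases h1 : j + 1 = c
    · rw [if_pos h1, if_neg (show ¬(j = c) by omega)]
      rcases hleft with h3 | h3
      · omega
      · have h4 : colLen T (c-1) = colLen T j := by rw [show c - 1 = j by omega]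
        omega
    · rw [if_neg h1]
      by_cases h2 : j = c
      · rw [if_pos h2]
        subst h2
        exact le_trans (hT.len j) (by omega)
      · rw [if_neg h2]
        exact hT.len j
  · intro j r' h
    rw [hL] at h
    rw [hE, hE]
    by_cases hj1 : j + 1 = c
    · rw [if_pos hj1] at h
      have hj : j ≠ c := by omega
      rw [if_neg (show ¬(j = c ∧ r' = colLen T c) by tauto)]
      by_cases hB : r' = colLen T c
      · rw [if_pos (show j + 1 = c ∧ r' = colLen T c from ⟨hj1, hB⟩)]
        subst hB
        rcases hleft with h3 | h3
        · omega
        · have h4 : ent T (c-1) (colLen T c) = ent T j (colLen T c) := by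
            rw [show c - 1 = j by omega]
          omega
      · rw [if_neg (show ¬(j + 1 = c ∧ r' = colLen T c) by tauto)]
        have h5 : colLen T (j+1) = colLen T c := by rw [hj1]
        exact hT.row j r' (by omega)
    · rw [if_neg hj1] at h
      by_cases hj : j = c
      · have h2 : r' < colLen T c := by
          subst hj; exact lt_of_lt_of_le h (hT.len j)
        rw [if_neg (show ¬(j + 1 = c ∧ r' = colLen T c) by tauto),
          if_neg (show ¬(j = c ∧ r' = colLen T c) by omega)]
        exact hT.row j r' h
      · rw [if_neg (show ¬(j + 1 = c ∧ r' = colLen T c) by tauto),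
          if_neg (show ¬(j = c ∧ r' = colLen T c) by tauto)]
        exact hT.row j r' h
/-! ### One step of Hecke insertion -/

def bumpOut (T : List (List ℕ)) (c x : ℕ) : ℕ :=
  ((colL T c).filter (fun z => decide (z < x))).foldr max 0

def bumpTab (T : List (List ℕ)) (c x : ℕ) : List (List ℕ) :=
  if IsDecTab (T.set c ((colL T c).map (fun z => if z = bumpOut T c x then x else z))) then
    T.set c ((colL T c).map (fun z => if z = bumpOut T c x then x else z))
  else T

lemma heckeGo_stop_succ {f : ℕ} {T : List (List ℕ)} {c x : ℕ}
    (h : ∀ z ∈ colL T c, x ≤ z) (h2 : IsDecTab (setCol T c (colL T c ++ [x]))) :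
    heckeGo (f+1) T c x = (setCol T c (colL T c ++ [x]), c, true) := by
  have e : T.getD c [] = colL T c := rfl
  simp only [heckeGo, e]
  rw [if_pos h, if_pos h2]

lemma heckeGo_stop_fail {f : ℕ} {T : List (List ℕ)} {c x : ℕ}
    (h : ∀ z ∈ colL T c, x ≤ z) (h2 : ¬ IsDecTab (setCol T c (colL T c ++ [x]))) :
    heckeGo (f+1) T c x = (T, rowEnd T (colLen T c - 1), false) := by
  have e : T.getD c [] = colL T c := rfl
  simp only [heckeGo, e]
  rw [if_pos h, if_neg h2]
  rfl

lemma heckeGo_bump {f : ℕ} {T : List (List ℕ)} {c x : ℕ}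
    (h : ¬ ∀ z ∈ colL T c, x ≤ z) :
    heckeGo (f+1) T c x = heckeGo f (bumpTab T c x) (c+1) (bumpOut T c x) := by
  have e : T.getD c [] = colL T c := rfl
  simp only [heckeGo, e]
  rw [if_neg h]
  rfl

/-! ### Properties of the bump step -/

section Bump
variable {T : List (List ℕ)} {c x : ℕ}

lemma bump_ex (hx : ¬ ∀ z ∈ colL T c, x ≤ z) :
    bumpOut T c x ∈ colL T c ∧ bumpOut T c x < x := by
  push_neg at hx
  obtain ⟨z, hz, hzx⟩ := hx
  have hne : (colL T c).filter (fun z => decide (z < x)) ≠ [] := by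
    intro hnil
    have : z ∈ (colL T c).filter (fun z => decide (z < x)) := by
      rw [List.mem_filter]; exact ⟨hz, by simpa using hzx⟩
    rw [hnil] at this; simp at this
  have hmem := foldr_max_mem _ hne
  rw [List.mem_filter] at hmem
  exact ⟨hmem.1, by simpa [bumpOut] using hmem.2⟩

lemma bump_max {z : ℕ} (hz : z ∈ colL T c) (hzx : z < x) :
    z ≤ bumpOut T c x :=
  le_foldr_max (by rw [List.mem_filter]; exact ⟨hz, by simpa using hzx⟩)

lemma bump_lt_len (hx : ¬ ∀ z ∈ colL T c, x ≤ z) : c < T.length := by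
  have := (bump_ex hx).1
  apply colLen_pos_lt
  rcases mem_colL_iff.mp this with ⟨r, hr, -⟩
  omega

lemma chain_col (hT : IsDecTab T) (c : ℕ) : List.Chain' (· > ·) (colL T c) := by
  rcases Nat.lt_or_ge c T.length with h | h
  · exact hT.1 _ (by rw [colL, List.getD_eq_getElem _ _ h]; exact List.getElem_mem _)
  · rw [colL_of_ge h]; exact List.isChain_nil

/-- The bumped value written as a `List.set`. -/
lemma bump_C'_eq (hT : IsDecTab T) {r : ℕ} (hr : r < colLen T c)
    (hy : ent T c r = bumpOut T c x) :
    (colL T c).map (fun z => if z = bumpOut T c x then x else z) = (colL T c).set r x :=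
  map_eq_set (chain_col hT c) hr hy

/-- Either the bump replacement happens, or it fails for one of two local reasons. -/
lemma bumpTab_cases (hT : IsDecTab T) (hx : ¬ ∀ z ∈ colL T c, x ≤ z) {r : ℕ}
    (hr : r < colLen T c) (hy : ent T c r = bumpOut T c x) :
    bumpTab T c x = T.set c ((colL T c).set r x) ∨
      (bumpTab T c x = T ∧
        ((0 < r ∧ ent T c (r-1) ≤ x) ∨ (0 < c ∧ ent T (c-1) r ≤ x))) := by
  unfold bumpTab
  rw [bump_C'_eq hT hr hy]
  split_ifs with hguard
  · exact Or.inl rfl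
  · right
    refine ⟨rfl, ?_⟩
    by_contra hcon
    push_neg at hcon
    obtain ⟨h1, h2⟩ := hcon
    apply hguard
    apply isDecTab_set_entry hT hr
    · rw [hy]; exact (bump_ex hx).2
    · rcases Nat.eq_zero_or_pos r with h | h
      · exact Or.inl h
      · exact Or.inr (h1 h)
    · rcases Nat.eq_zero_or_pos c with h | h
      · exact Or.inl h
      · exact Or.inr (h2 h)
    · intro hr'
      have h3 := hT.row c r hr'
      have h4 := (bump_ex hx).2
      omega

lemma bumpTab_isDecTab (hT : IsDecTab T) : IsDecTab (bumpTab T c x) := by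
  unfold bumpTab
  split_ifs with h
  · exact h
  · exact hT

lemma bumpTab_length : (bumpTab T c x).length = T.length := by
  unfold bumpTab
  split_ifs <;> simp

lemma bumpTab_colL_ne (hx : ¬ ∀ z ∈ colL T c, x ≤ z) {j : ℕ} (hj : j ≠ c) :
    colL (bumpTab T c x) j = colL T j := by
  have hc := bump_lt_len hx
  unfold bumpTab
  split_ifs with h
  · rw [colL_set hc, if_neg hj]
  · rfl

lemma bumpTab_colLen_eq (hx : ¬ ∀ z ∈ colL T c, x ≤ z) (j : ℕ) :
    colLen (bumpTab T c x) j = colLen T j := by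
  have hc := bump_lt_len hx
  by_cases hj : j = c
  · subst hj
    unfold bumpTab colLen
    split_ifs with h
    · rw [colL_set hc, if_pos rfl]; simp
    · rfl
  · unfold colLen; rw [bumpTab_colL_ne hx hj]

/-- Entries of the bumped column: either unchanged, or the bumped-out entry
replaced by `x`. -/
lemma bumpTab_ent (hT : IsDecTab T) (hx : ¬ ∀ z ∈ colL T c, x ≤ z) {r : ℕ}
    (hr : r < colLen T c) (hy : ent T c r = bumpOut T c x) (r' : ℕ) :
    ent (bumpTab T c x) c r' = ent T c r' ∨
      (r' = r ∧ ent (bumpTab T c x) c r' = x) := by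
  have hc := bump_lt_len hx
  unfold bumpTab
  rw [bump_C'_eq hT hr hy]
  split_ifs with h
  · unfold ent
    rw [colL_set hc, if_pos rfl, getD_set]
    by_cases h2 : r' = r
    · right
      refine ⟨h2, ?_⟩
      rw [if_pos ⟨h2, hr⟩]
    · left; rw [if_neg (by tauto)]
  · left; rfl

/-- Propagation of the invariant: the top of the bumped column is larger than the
bumped-out value. -/
lemma bumpTab_top (hT : IsDecTab T) (hx : ¬ ∀ z ∈ colL T c, x ≤ z)
    (hI3 : c = 0 ∨ x < ent T (c-1) 0) :
    bumpOut T c x < ent (bumpTab T c x) c 0 := by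
  have hc := bump_lt_len hx
  obtain ⟨hmem, hlt⟩ := bump_ex (T := T) (c := c) (x := x) hx
  obtain ⟨r, hr, hy⟩ := mem_colL_iff.mp hmem
  rcases Nat.eq_zero_or_pos r with hr0 | hr0
  · -- bumped value is at the top: replacement must succeed
    subst hr0
    have hrepl : bumpTab T c x = T.set c ((colL T c).set 0 x) := by
      unfold bumpTab
      rw [bump_C'_eq hT hr hy]
      rw [if_pos]
      apply isDecTab_set_entry hT hr
      · omega
      · exact Or.inl rfl
      · rcases hI3 with h | h
        · exact Or.inl h
        · exact Or.inr h
      · intro hr'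
        have h3 := hT.row c 0 hr'
        omega
    rw [hrepl]
    unfold ent
    rw [colL_set hc, if_pos rfl, getD_set, if_pos ⟨rfl, hr⟩]
    omega
  · -- bumped value is below the top; the top is unchanged (or anyway larger)
    have h0 : ent T c 0 > ent T c r := hT.col' hr0 hr
    rcases bumpTab_ent hT hx hr hy 0 with h | ⟨h1, -⟩
    · omega
    · omega

end Bump
/-! ### The stop branch -/

lemma stop_iff {T : List (List ℕ)} {c x : ℕ} :
    (∀ z ∈ colL T c, x ≤ z) ↔ ∀ r < colLen T c, x ≤ ent T c r := by
  constructor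
  · intro h r hr
    exact h _ (mem_colL_iff.mpr ⟨r, hr, rfl⟩)
  · intro h z hz
    obtain ⟨r, hr, rfl⟩ := mem_colL_iff.mp hz
    exact h r hr

lemma appfail_reason {T : List (List ℕ)} {c x : ℕ} (hT : IsDecTab T) (hc : c ≤ T.length)
    (hfail : ¬ IsDecTab (setCol T c (colL T c ++ [x]))) :
    (0 < colLen T c ∧ ent T c (colLen T c - 1) ≤ x) ∨
      (0 < c ∧ (colLen T (c-1) ≤ colLen T c ∨ ent T (c-1) (colLen T c) ≤ x)) := by
  by_contra hcon
  push_neg at hcon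
  obtain ⟨h1, h2⟩ := hcon
  apply hfail
  apply isDecTab_setCol_app hT hc
  · rcases Nat.eq_zero_or_pos (colLen T c) with h | h
    · exact Or.inl h
    · exact Or.inr (h1 h)
  · rcases Nat.eq_zero_or_pos c with h | h
    · exact Or.inl h
    · obtain ⟨h3, h4⟩ := h2 h
      exact Or.inr ⟨by omega, h4⟩

lemma appfail_nonempty {T : List (List ℕ)} {c x : ℕ} (hT : IsDecTab T) (hc : c ≤ T.length)
    (hI3 : c = 0 ∨ x < ent T (c-1) 0)
    (hfail : ¬ IsDecTab (setCol T c (colL T c ++ [x]))) :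
    0 < colLen T c := by
  rcases appfail_reason hT hc hfail with ⟨h1, -⟩ | ⟨h1, h2⟩
  · exact h1
  · rcases hI3 with h | h
    · omega
    · -- left column is nonempty since its top exceeds x ≥ 0
      have h5 : 0 < colLen T (c-1) := by
        by_contra h6
        have : colL T (c-1) = [] := by
          unfold colLen at h6
          exact List.length_eq_zero_iff.mp (by omega)
        unfold ent at h
        rw [this] at h
        simp at h
      rcases Nat.eq_zero_or_pos (colLen T c) with h0 | h0
      · exfalso
        rcases h2 with h2 | h2
        · omega
        · -- ent T (c-1) 0 ≤ x contradicts hI3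
          rw [h0] at h2
          omega
      · exact h0

/-! ### rowEnd -/

lemma filter_eq_take {α : Type*} (p : α → Bool) :
    ∀ (L : List α) (k : ℕ), k < L.length →
      (∀ j (hj : j < L.length), p (L.get ⟨j, hj⟩) = true ↔ j ≤ k) →
      L.filter p = L.take (k+1)
  | [], k, hk, _ => by simp at hk
  | a :: t, k, hk, h => by
    have ha : p a = true := by
      have := (h 0 (by simp)).mpr (by omega)
      simpa using this
    rcases Nat.eq_zero_or_pos k with rfl | hkpos
    · rw [List.filter_cons_of_pos ha]
      simp only [List.take_succ_cons, List.take_zero]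
      congr 1
      rw [List.filter_eq_nil_iff]
      intro b hb
      obtain ⟨⟨j, hj⟩, rfl⟩ := List.mem_iff_get.mp hb
      have := (h (j+1) (by simpa using Nat.succ_lt_succ hj)).mp
      intro hpb
      have h2 := this (by simpa using hpb)
      omega
    · obtain ⟨k', rfl⟩ : ∃ k', k = k' + 1 := ⟨k - 1, by omega⟩
      rw [List.filter_cons_of_pos ha, List.take_succ_cons]
      congr 1
      apply filter_eq_take p t k' (by simpa using hk)
      intro j hj
      have := h (j+1) (by simpa using Nat.succ_lt_succ hj)
      simpa using this.trans (by omega)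

lemma rowEnd_eq {B : List (List ℕ)} {m k : ℕ} (hB : IsDecTab B) (hm : 1 ≤ m)
    (hk : m ≤ colLen B k) (hmax : ∀ j, k < j → colLen B j < m) :
    rowEnd B (m-1) = k := by
  have hklen : k < B.length := colLen_pos_lt (by omega)
  unfold rowEnd
  have heq : B.filter (fun col => decide (m-1 < col.length)) = B.take (k+1) := by
    apply filter_eq_take _ _ _ hklen
    intro j hj
    have hcl : colL B j = B.get ⟨j, hj⟩ := List.getD_eq_get _ _ ⟨j, hj⟩
    constructor
    · intro hp
      by_contra hjk
      have := hmax j (by omega)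
      unfold colLen at this
      rw [hcl] at this
      simp only [decide_eq_true_eq] at hp
      omega
    · intro hjk
      have h5 : colLen B j ≥ colLen B k := hB.len' hjk
      have h6 : colLen B j = (B.get ⟨j, hj⟩).length := by
        unfold colLen; rw [hcl]
      simp only [decide_eq_true_eq]
      omega
  rw [heq, List.length_take]
  omega

lemma exists_greatest {B : List (List ℕ)} {m c : ℕ} (hB : IsDecTab B) (hm : 1 ≤ m)
    (hc : m ≤ colLen B c) :
    ∃ k, c ≤ k ∧ m ≤ colLen B k ∧ ∀ j, k < j → colLen B j < m := by
  classical
  set P : ℕ → Prop := fun j => m ≤ colLen B j with hP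
  have hclen : c < B.length := colLen_pos_lt (by omega)
  have hPc : P c := hc
  refine ⟨Nat.findGreatest P B.length, ?_, ?_, ?_⟩
  · exact Nat.le_findGreatest (P := P) (by omega) hPc
  · exact Nat.findGreatest_spec (P := P) (by omega) hPc
  · intro j hj
    by_contra h2
    push_neg at h2
    rcases Nat.lt_or_ge B.length j with h3 | h3
    · have h4 : colL B j = [] := colL_of_ge (by omega)
      have h5 : colLen B j = 0 := by unfold colLen; rw [h4]; rfl
      omega
    · exact absurd h2 (Nat.findGreatest_is_greatest (P := P) hj h3)

/-! ### Runs do not modify columns to the left -/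

lemma heckeGo_untouched : ∀ (f : ℕ) (B : List (List ℕ)) (c x j : ℕ), c ≤ B.length →
    j < c → colL (heckeGo f B c x).1 j = colL B j
  | 0, B, c, x, j, _, _ => rfl
  | f+1, B, c, x, j, hc, hj => by
    by_cases hstop : ∀ z ∈ colL B c, x ≤ z
    · by_cases hsucc : IsDecTab (setCol B c (colL B c ++ [x]))
      · rw [heckeGo_stop_succ hstop hsucc]
        exact (colL_setCol hc _ j).trans (if_neg (by omega))
      · rw [heckeGo_stop_fail hstop hsucc]
    · rw [heckeGo_bump hstop]
      have hlt := bump_lt_len hstop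
      rw [heckeGo_untouched f _ _ _ j (by rw [bumpTab_length]; omega) (by omega)]
      exact bumpTab_colL_ne hstop (by omega)

lemma heckeGo_isDecTab : ∀ (f : ℕ) (B : List (List ℕ)) (c x : ℕ), IsDecTab B →
    IsDecTab (heckeGo f B c x).1
  | 0, B, c, x, hB => hB
  | f+1, B, c, x, hB => by
    by_cases hstop : ∀ z ∈ colL B c, x ≤ z
    · by_cases hsucc : IsDecTab (setCol B c (colL B c ++ [x]))
      · rw [heckeGo_stop_succ hstop hsucc]; exact hsucc
      · rw [heckeGo_stop_fail hstop hsucc]; exact hB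
    · rw [heckeGo_bump hstop]
      exact heckeGo_isDecTab f _ _ _ (bumpTab_isDecTab hB)
/-! ### The end column of a run is at least the start column -/

lemma heckeGo_end_ge : ∀ (f : ℕ) (B : List (List ℕ)) (c u : ℕ), IsDecTab B →
    c ≤ B.length → B.length + 1 ≤ f + c → (c = 0 ∨ u < ent B (c-1) 0) →
    c ≤ (heckeGo f B c u).2.1
  | 0, B, c, u, _, hc, hf, _ => by omega
  | f+1, B, c, u, hB, hc, hf, hI3 => by
    by_cases hstop : ∀ z ∈ colL B c, u ≤ z
    · by_cases hsucc : IsDecTab (setCol B c (colL B c ++ [u]))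
      · rw [heckeGo_stop_succ hstop hsucc]
      · rw [heckeGo_stop_fail hstop hsucc]
        have hm := appfail_nonempty hB hc hI3 hsucc
        obtain ⟨k, hk1, hk2, hk3⟩ := exists_greatest hB hm (le_refl _)
        rw [rowEnd_eq hB hm hk2 hk3]
        exact hk1
    · rw [heckeGo_bump hstop]
      have hlt := bump_lt_len hstop
      have h5 := heckeGo_end_ge f (bumpTab B c u) (c+1) (bumpOut B c u)
        (bumpTab_isDecTab hB) (by rw [bumpTab_length]; omega)
        (by rw [bumpTab_length]; omega)
        (Or.inr (by simpa using bumpTab_top hB hstop hI3))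
      omega

/-- A run entering a row of boxes of width `≥ m` while dominating the entries of
row `m-1` exits strictly to the right of all columns of length `≥ m`. -/
lemma heckeGo_pass : ∀ (f : ℕ) (B : List (List ℕ)) (j u m k : ℕ), IsDecTab B →
    j ≤ B.length → B.length + 1 ≤ f + j → (j = 0 ∨ u < ent B (j-1) 0) →
    1 ≤ m → j ≤ k → m ≤ colLen B k → (∀ i, k < i → colLen B i < m) →
    ent B j (m-1) < u →
    k + 1 ≤ (heckeGo f B j u).2.1
  | 0, B, j, u, m, k, _, hj, hf, _, _, _, _, _, _ => by omega
  | f+1, B, j, u, m, k, hB, hj, hf, hI3, hm, hjk, hk, hmax, hu => by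
    have hlen : m ≤ colLen B j := le_trans hk (hB.len' hjk)
    have hment : ent B j (m-1) ∈ colL B j := mem_colL_iff.mpr ⟨m-1, by omega, rfl⟩
    have hstop : ¬ ∀ z ∈ colL B j, u ≤ z := by
      intro h
      exact absurd (h _ hment) (by omega)
    rw [heckeGo_bump hstop]
    have hlt := bump_lt_len hstop
    have hy2 : ent B j (m-1) ≤ bumpOut B j u := bump_max hment hu
    have hI3' : (j + 1 = 0) ∨ bumpOut B j u < ent (bumpTab B j u) (j+1-1) 0 :=
      Or.inr (by simpa using bumpTab_top hB hstop hI3)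
    rcases Nat.eq_or_lt_of_le hjk with rfl | hjk'
    · -- j = k : one more bump, then use heckeGo_end_ge
      have h5 := heckeGo_end_ge f (bumpTab B j u) (j+1) (bumpOut B j u)
        (bumpTab_isDecTab hB) (by rw [bumpTab_length]; omega)
        (by rw [bumpTab_length]; omega) hI3'
      omega
    · -- j < k : recurse
      apply heckeGo_pass f (bumpTab B j u) (j+1) (bumpOut B j u) m k
        (bumpTab_isDecTab hB) (by rw [bumpTab_length]; omega)
        (by rw [bumpTab_length]; omega) hI3' hm (by omega)
      · rw [bumpTab_colLen_eq hstop]; exact hk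
      · intro i hi
        rw [bumpTab_colLen_eq hstop]; exact hmax i hi
      · have he : ent (bumpTab B j u) (j+1) (m-1) = ent B (j+1) (m-1) := by
          unfold ent
          rw [bumpTab_colL_ne hstop (by omega)]
        rw [he]
        have hrow : ent B (j+1) (m-1) < ent B j (m-1) := by
          apply hB.row
          have : m ≤ colLen B (j+1) := le_trans hk (hB.len' hjk')
          omega
        omega

/-- If a run starts in a column of length `≤ m` whose left neighbour also has
length `≤ m`, then no column of length `≥ m` lies strictly right of its end. -/
lemma heckeGo_ge : ∀ (f : ℕ) (A : List (List ℕ)) (c v m : ℕ), IsDecTab A →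
    0 < c → c ≤ A.length → A.length + 1 ≤ f + c → v < ent A (c-1) 0 →
    1 ≤ m → colLen A c ≤ m → colLen A (c-1) ≤ m →
    ∀ k, m ≤ colLen (heckeGo f A c v).1 k → k ≤ (heckeGo f A c v).2.1
  | 0, A, c, v, m, _, _, hc, hf, _, _, _, _ => by omega
  | f+1, A, c, v, m, hA, hc0, hc, hf, hI3, hm, hlenc, hlenl => by
    by_cases hstop : ∀ z ∈ colL A c, v ≤ z
    · by_cases hsucc : IsDecTab (setCol A c (colL A c ++ [v]))
      · rw [heckeGo_stop_succ hstop hsucc]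
        intro k hk
        simp only
        by_contra hkc
        push_neg at hkc
        -- column k, strictly right of c, has length ≥ m
        have hkcol : colL (setCol A c (colL A c ++ [v])) k = colL A k :=
          (colL_setCol hc _ k).trans (if_neg (by omega))
        have hk2 : m ≤ colLen A k := by
          unfold colLen at hk ⊢
          rw [hkcol] at hk
          exact hk
        have hk3 : colLen A k ≤ colLen A c := hA.len' (by omega)
        -- so colLen A c = m; but the append succeeded, forcing the left column
        -- to be longer than m
        have hTlen := hsucc.len (c-1)
        have e1 : colLen (setCol A c (colL A c ++ [v])) c = colLen A c + 1 := by
          unfold colLen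
          rw [colL_setCol hc _ c, if_pos rfl]
          simp
        have e2 : colLen (setCol A c (colL A c ++ [v])) (c-1) = colLen A (c-1) := by
          unfold colLen
          rw [colL_setCol hc _ (c-1), if_neg (by omega)]
        rw [show c - 1 + 1 = c by omega, e1, e2] at hTlen
        omega
      · rw [heckeGo_stop_fail hstop hsucc]
        intro k hk
        simp only at hk ⊢
        have hm'' := appfail_nonempty hA hc (Or.inr hI3) hsucc
        obtain ⟨k0, hk01, hk02, hk03⟩ := exists_greatest hA hm'' (le_refl _)
        rw [rowEnd_eq hA hm'' hk02 hk03]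
        by_contra hcon
        push_neg at hcon
        have := hk03 k hcon
        omega
    · rw [heckeGo_bump hstop]
      have hlt := bump_lt_len hstop
      apply heckeGo_ge f (bumpTab A c v) (c+1) (bumpOut A c v) m
        (bumpTab_isDecTab hA) (by omega) (by rw [bumpTab_length]; omega)
        (by rw [bumpTab_length]; omega)
        (by simpa using bumpTab_top hA hstop (Or.inr hI3))
        hm
      · rw [bumpTab_colLen_eq hstop]
        exact le_trans (hA.len c) hlenc
      · simp only [Nat.add_sub_cancel]
        rw [bumpTab_colLen_eq hstop]
        exact hlenc
/-! ### The Pieri property, first direction: larger second insertion goes strictly right -/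

lemma big1 : ∀ (f g : ℕ) (A B : List (List ℕ)) (c v u : ℕ),
    IsDecTab A → IsDecTab B →
    c ≤ A.length → c ≤ B.length →
    A.length + 1 ≤ f + c → B.length + 1 ≤ g + c →
    (∀ j, c ≤ j → colL B j = colL (heckeGo f A c v).1 j) →
    (c = 0 ∨ v < ent A (c-1) 0) →
    (c = 0 ∨ u < ent B (c-1) 0) →
    (c = 0 ∨ ∃ r, r < colLen A (c-1) ∧ ent A (c-1) r = u) →
    v < u →
    (heckeGo f A c v).2.1 < (heckeGo g B c u).2.1
  | 0, g, A, B, c, v, u, _, _, hcA, _, hfA, _, _, _, _, _, _ => by omega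
  | f+1, 0, A, B, c, v, u, _, _, _, hcB, _, hfB, _, _, _, _, _ => by omega
  | f+1, g+1, A, B, c, v, u, hA, hB, hcA, hcB, hfA, hfB, hag, hI3A, hI3B, hmemu, hvu => by
    by_cases hstopA : ∀ z ∈ colL A c, v ≤ z
    · -- Run 1 stops at column c.
      by_cases hsucc : IsDecTab (setCol A c (colL A c ++ [v]))
      · -- Run 1 appends v at the bottom of column c; ends at c.
        rw [heckeGo_stop_succ hstopA hsucc]
        simp only [heckeGo_stop_succ hstopA hsucc] at hag
        have hBc : colL B c = colL A c ++ [v] := by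
          rw [hag c (le_refl c), colL_setCol hcA, if_pos rfl]
        have hvmem : v ∈ colL B c := by
          rw [hBc]; simp
        have hstopB : ¬ ∀ z ∈ colL B c, u ≤ z := by
          intro h
          exact absurd (h v hvmem) (by omega)
        rw [heckeGo_bump hstopB]
        have hcB' : c < B.length := by
          apply colLen_pos_lt
          rcases mem_colL_iff.mp hvmem with ⟨r, hr, -⟩
          omega
        have h5 := heckeGo_end_ge g (bumpTab B c u) (c+1) (bumpOut B c u)
          (bumpTab_isDecTab hB) (by rw [bumpTab_length]; omega)
          (by rw [bumpTab_length]; omega)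
          (Or.inr (by simpa using bumpTab_top hB hstopB hI3B))
        simp only
        omega
      · -- Run 1 fails to append; ends at the right end of row (colLen A c - 1).
        rw [heckeGo_stop_fail hstopA hsucc]
        simp only [heckeGo_stop_fail hstopA hsucc] at hag
        have hm : 0 < colLen A c := appfail_nonempty hA hcA hI3A hsucc
        have hBc : colL B c = colL A c := by
          rw [hag c (le_refl c)]
        have hlenBc : colLen B c = colLen A c := by
          unfold colLen; rw [hBc]
        have hstopA' : ∀ r < colLen A c, v ≤ ent A c r := stop_iff.mp hstopA
        -- there is an entry of column c smaller than u
        have hex : ∃ r, r < colLen A c ∧ ent A c r < u := by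
          rcases appfail_reason hA hcA hsucc with ⟨h1, hbot⟩ | ⟨hc0, hor⟩
          · have hb := hstopA' (colLen A c - 1) (by omega)
            exact ⟨colLen A c - 1, by omega, by omega⟩
          · obtain ⟨ru, hru, hruent⟩ := hmemu.resolve_left (by omega)
            have hrow := hA.row (c-1) ru
            rw [show c - 1 + 1 = c by omega] at hrow
            rcases hor with hlen | hentl
            · have hru2 : ru < colLen A c := by omega
              have h7 := hrow (by omega)
              exact ⟨ru, hru2, by omega⟩
            · have hru2 : ru < colLen A c := by
                by_contra hcon
                push_neg at hcon
                have h6 : ent A (c-1) ru ≤ ent A (c-1) (colLen A c) :=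
                  hA.col'' hcon hru
                omega
              have h7 := hrow (by omega)
              exact ⟨ru, hru2, by omega⟩
        obtain ⟨rs, hrs, hes⟩ := hex
        have hmemBrs : ent A c rs ∈ colL B c := by
          rw [hBc]
          exact mem_colL_iff.mpr ⟨rs, hrs, rfl⟩
        have hstopB : ¬ ∀ z ∈ colL B c, u ≤ z := by
          intro h
          exact absurd (h _ hmemBrs) (by omega)
        rw [heckeGo_bump hstopB]
        have hcB' : c < B.length := colLen_pos_lt (by omega)
        -- the bumped-out value dominates the bottom entry of column c
        have hw : ent A c (colLen A c - 1) ≤ bumpOut B c u := by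
          have h7 : ent A c rs ≤ bumpOut B c u := bump_max hmemBrs (by omega)
          have h8 : ent A c (colLen A c - 1) ≤ ent A c rs := hA.col'' (by omega) (by omega)
          omega
        obtain ⟨k, hk1, hk2, hk3⟩ := exists_greatest hA hm (le_refl (colLen A c))
        rw [rowEnd_eq hA hm hk2 hk3]
        simp only
        have hI3' : (c + 1 = 0) ∨ bumpOut B c u < ent (bumpTab B c u) (c+1-1) 0 :=
          Or.inr (by simpa using bumpTab_top hB hstopB hI3B)
        rcases Nat.eq_or_lt_of_le hk1 with rfl | hck
        · -- k = c : one bump and end ≥ c+1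
          have h5 := heckeGo_end_ge g (bumpTab B c u) (c+1) (bumpOut B c u)
            (bumpTab_isDecTab hB) (by rw [bumpTab_length]; omega)
            (by rw [bumpTab_length]; omega) hI3'
          omega
        · -- k > c : pass through all columns of length ≥ colLen A c
          have h5 := heckeGo_pass g (bumpTab B c u) (c+1) (bumpOut B c u) (colLen A c) k
            (bumpTab_isDecTab hB) (by rw [bumpTab_length]; omega)
            (by rw [bumpTab_length]; omega) hI3' (by omega) (by omega)
            (by
              rw [bumpTab_colLen_eq hstopB]
              have he : colL B k = colL A k := by rw [hag k (by omega)]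
              unfold colLen
              rw [he]
              exact hk2)
            (by
              intro i hi
              rw [bumpTab_colLen_eq hstopB]
              have he : colL B i = colL A i := by rw [hag i (by omega)]
              unfold colLen
              rw [he]
              exact hk3 i hi)
            (by
              have he : ent (bumpTab B c u) (c+1) (colLen A c - 1) = ent A (c+1) (colLen A c - 1) := by
                unfold ent
                rw [bumpTab_colL_ne hstopB (by omega), hag (c+1) (by omega)]
              rw [he]
              have hlen1 : colLen A c ≤ colLen A (c+1) := le_trans hk2 (hA.len' (by omega))
              have hrow : ent A (c+1) (colLen A c - 1) < ent A c (colLen A c - 1) :=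
                hA.row c (colLen A c - 1) (by omega)
              omega)
          omega
    · -- Run 1 bumps at column c.
      rw [heckeGo_bump hstopA]
      simp only [heckeGo_bump hstopA] at hag
      have hcA' : c < A.length := bump_lt_len hstopA
      obtain ⟨hymem, hylt⟩ := bump_ex hstopA
      obtain ⟨ry, hry, hyent⟩ := mem_colL_iff.mp hymem
      have hBc : colL B c = colL (bumpTab A c v) c := by
        rw [hag c (le_refl c)]
        rw [heckeGo_untouched f (bumpTab A c v) (c+1) (bumpOut A c v) c
          (by rw [bumpTab_length]; omega) (by omega)]
      have hentB : ∀ r', ent B c r' = ent (bumpTab A c v) c r' := by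
        intro r'; unfold ent; rw [hBc]
      have hlenB : colLen B c = colLen A c := by
        unfold colLen
        rw [hBc]
        have h9 := bumpTab_colLen_eq (T := A) (c := c) (x := v) hstopA c
        unfold colLen at h9
        exact h9
      -- run 2 must bump as well
      have hentry : ent B c ry < u := by
        rw [hentB ry]
        rcases bumpTab_ent hA hstopA hry hyent ry with h | ⟨-, h⟩
        · omega
        · omega
      have hstopB : ¬ ∀ z ∈ colL B c, u ≤ z := by
        intro h
        have hmemB : ent B c ry ∈ colL B c := mem_colL_iff.mpr ⟨ry, by omega, rfl⟩
        exact absurd (h _ hmemB) (by omega)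
      rw [heckeGo_bump hstopB]
      have hcB' : c < B.length := colLen_pos_lt (by omega)
      -- key step: the value bumped out by run 2 exceeds the one bumped out by run 1
      have hkey : bumpOut A c v < bumpOut B c u := by
        rcases bumpTab_ent hA hstopA hry hyent ry with hsame | ⟨-, hrepl⟩
        · -- column c did not change at row ry
          rcases bumpTab_cases hA hstopA hry hyent with hset | ⟨hid, hreason⟩
          · -- replacement happened: contradiction with hsame
            exfalso
            have : ent (bumpTab A c v) c ry = v := by
              rw [hset]
              unfold ent
              rw [colL_set hcA', if_pos rfl, getD_set, if_pos ⟨rfl, hry⟩]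
            rw [hsame, hyent] at this
            omega
          · -- no replacement; use the failure reason
            rcases hreason with ⟨hry0, habove⟩ | ⟨hc0, hleft⟩
            · -- the entry above y is ≤ v < u
              have he1 : ent A c (ry - 1) ∈ colL B c := by
                rw [hBc, hid]
                exact mem_colL_iff.mpr ⟨ry - 1, by omega, rfl⟩
              have he2 : ent A c ry < ent A c (ry - 1) := hA.col' (by omega) hry
              have h7 := bump_max (x := u) he1 (by omega)
              omega
            · -- failure due to the left column: find an entry of column c in [v, u)
              obtain ⟨ru, hru, hruent⟩ := hmemu.resolve_left (by omega)
              have hrur : ru < ry := by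
                by_contra hcon
                push_neg at hcon
                have h6 : ent A (c-1) ru ≤ ent A (c-1) ry := hA.col'' hcon hru
                omega
              have hrow := hA.row (c-1) ru
              rw [show c - 1 + 1 = c by omega] at hrow
              have h7 : ent A c ru < u := by
                have := hrow (by omega)
                omega
              have h8 : ent A c ry < ent A c ru := hA.col' hrur hry
              have h9 : v ≤ ent A c ru := by
                by_contra hcon
                push_neg at hcon
                have := bump_max (mem_colL_iff.mpr ⟨ru, by omega, rfl⟩) hcon
                omega
              have hmemu2 : ent A c ru ∈ colL B c := by
                rw [hBc, hid]
                exact mem_colL_iff.mpr ⟨ru, by omega, rfl⟩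
              have h10 := bump_max (x := u) hmemu2 (by omega)
              omega
        · -- run 1 replaced y by v; v < u is in column c of B
          have h11 : colLen (bumpTab A c v) c = colLen A c := bumpTab_colLen_eq hstopA c
          have hvB : v ∈ colL B c := by
            rw [hBc]
            exact mem_colL_iff.mpr ⟨ry, by omega, hrepl⟩
          have h7 := bump_max (x := u) hvB (by omega)
          omega
      -- recurse
      obtain ⟨hy2mem, hy2lt⟩ := bump_ex hstopB
      obtain ⟨r2, hr2, hy2ent⟩ := mem_colL_iff.mp hy2mem
      apply big1 f g (bumpTab A c v) (bumpTab B c u) (c+1) (bumpOut A c v) (bumpOut B c u)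
        (bumpTab_isDecTab hA) (bumpTab_isDecTab hB)
        (by rw [bumpTab_length]; omega) (by rw [bumpTab_length]; omega)
        (by rw [bumpTab_length]; omega) (by rw [bumpTab_length]; omega)
        ?_ ?_ ?_ ?_ hkey
      · intro j hj
        rw [bumpTab_colL_ne hstopB (by omega)]
        exact hag j (by omega)
      · exact Or.inr (by simpa using bumpTab_top hA hstopA hI3A)
      · exact Or.inr (by simpa using bumpTab_top hB hstopB hI3B)
      · refine Or.inr ⟨r2, ?_, ?_⟩
        · simp only [Nat.add_sub_cancel]
          rw [bumpTab_colLen_eq hstopA c]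
          omega
        · simp only [Nat.add_sub_cancel]
          unfold ent
          rw [← hBc]
          exact hy2ent
/-! ### The Pieri property, second direction: a weakly smaller second insertion
ends weakly left -/

lemma big2 : ∀ (f g : ℕ) (A B : List (List ℕ)) (c v u : ℕ),
    IsDecTab A → IsDecTab B →
    c ≤ A.length → c ≤ B.length →
    A.length + 1 ≤ f + c → B.length + 1 ≤ g + c →
    (∀ j, c ≤ j → colL B j = colL (heckeGo f A c v).1 j) →
    (c = 0 ∨ v < ent A (c-1) 0) →
    (c = 0 ∨ u < ent B (c-1) 0) →
    u ≤ v →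
    (heckeGo g B c u).2.1 ≤ (heckeGo f A c v).2.1
  | 0, g, A, B, c, v, u, _, _, hcA, _, hfA, _, _, _, _, _ => by omega
  | f+1, 0, A, B, c, v, u, _, _, _, hcB, _, hfB, _, _, _, _ => by omega
  | f+1, g+1, A, B, c, v, u, hA, hB, hcA, hcB, hfA, hfB, hag, hI3A, hI3B, huv => by
    by_cases hstopA : ∀ z ∈ colL A c, v ≤ z
    · -- Run 1 stops at column c; run 2 must stop as well.
      by_cases hsucc : IsDecTab (setCol A c (colL A c ++ [v]))
      · -- Run 1 appends; ends at c.
        rw [heckeGo_stop_succ hstopA hsucc]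
        simp only [heckeGo_stop_succ hstopA hsucc] at hag
        have hBc : colL B c = colL A c ++ [v] := by
          rw [hag c (le_refl c), colL_setCol hcA, if_pos rfl]
        have hstopB : ∀ z ∈ colL B c, u ≤ z := by
          intro z hz
          rw [hBc] at hz
          rcases List.mem_append.mp hz with hz | hz
          · exact le_trans huv (hstopA z hz)
          · simp only [List.mem_singleton] at hz
            omega
        have hLB : colLen B c = colLen A c + 1 := by
          unfold colLen
          rw [hBc]
          simp
        by_cases hsucc2 : IsDecTab (setCol B c (colL B c ++ [u]))
        · rw [heckeGo_stop_succ hstopB hsucc2]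
        · rw [heckeGo_stop_fail hstopB hsucc2]
          simp only
          have hre : rowEnd B (colLen B c - 1) = c := by
            apply rowEnd_eq hB (by omega) (by omega)
            intro j hj
            have he : colL B j = colL A j := by
              rw [hag j (by omega), colL_setCol hcA, if_neg (by omega)]
            have h5 : colLen A j ≤ colLen A c := hA.len' (by omega)
            have h6 : colLen B j = colLen A j := by unfold colLen; rw [he]
            omega
          omega
      · -- Run 1 fails to append; both runs end at the right end of the same row.
        rw [heckeGo_stop_fail hstopA hsucc]
        simp only [heckeGo_stop_fail hstopA hsucc] at hag
        have hm : 0 < colLen A c := appfail_nonempty hA hcA hI3A hsucc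
        have hBc : colL B c = colL A c := hag c (le_refl c)
        have hLB : colLen B c = colLen A c := by
          unfold colLen; rw [hBc]
        have hstopB : ∀ z ∈ colL B c, u ≤ z := by
          intro z hz
          rw [hBc] at hz
          exact le_trans huv (hstopA z hz)
        obtain ⟨k, hk1, hk2, hk3⟩ := exists_greatest hA hm (le_refl (colLen A c))
        rw [rowEnd_eq hA hm hk2 hk3]
        simp only
        by_cases hsucc2 : IsDecTab (setCol B c (colL B c ++ [u]))
        · rw [heckeGo_stop_succ hstopB hsucc2]
          simp only
          omega
        · rw [heckeGo_stop_fail hstopB hsucc2]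
          simp only
          have hre : rowEnd B (colLen B c - 1) = k := by
            rw [hLB]
            apply rowEnd_eq hB hm
            · have he : colL B k = colL A k := hag k (by omega)
              unfold colLen
              rw [he]
              exact hk2
            · intro j hj
              have he : colL B j = colL A j := hag j (by omega)
              unfold colLen
              rw [he]
              exact hk3 j hj
          omega
    · -- Run 1 bumps at column c.
      rw [heckeGo_bump hstopA]
      simp only [heckeGo_bump hstopA] at hag
      have hcA' : c < A.length := bump_lt_len hstopA
      obtain ⟨hymem, hylt⟩ := bump_ex hstopA
      obtain ⟨ry, hry, hyent⟩ := mem_colL_iff.mp hymem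
      have hBc : colL B c = colL (bumpTab A c v) c := by
        rw [hag c (le_refl c)]
        rw [heckeGo_untouched f (bumpTab A c v) (c+1) (bumpOut A c v) c
          (by rw [bumpTab_length]; omega) (by omega)]
      have hlenB : colLen B c = colLen A c := by
        unfold colLen
        rw [hBc]
        have h9 := bumpTab_colLen_eq (T := A) (c := c) (x := v) hstopA c
        unfold colLen at h9
        exact h9
      have hI3A' : (c + 1 = 0) ∨ bumpOut A c v < ent (bumpTab A c v) (c+1-1) 0 :=
        Or.inr (by simpa using bumpTab_top hA hstopA hI3A)
      by_cases hstopB : ∀ z ∈ colL B c, u ≤ z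
      · -- Run 2 stops at column c while run 1 continues.
        have hend1 := heckeGo_end_ge f (bumpTab A c v) (c+1) (bumpOut A c v)
          (bumpTab_isDecTab hA) (by rw [bumpTab_length]; omega)
          (by rw [bumpTab_length]; omega) hI3A'
        by_cases hsucc2 : IsDecTab (setCol B c (colL B c ++ [u]))
        · rw [heckeGo_stop_succ hstopB hsucc2]
          simp only
          omega
        · rw [heckeGo_stop_fail hstopB hsucc2]
          simp only
          obtain ⟨k, hk1, hk2, hk3⟩ := exists_greatest hB (by omega)
            (le_refl (colLen B c))
          rw [rowEnd_eq hB (by omega) hk2 hk3]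
          -- use heckeGo_ge on the continued run 1
          have hge := heckeGo_ge f (bumpTab A c v) (c+1) (bumpOut A c v) (colLen B c)
            (bumpTab_isDecTab hA) (by omega) (by rw [bumpTab_length]; omega)
            (by rw [bumpTab_length]; omega)
            (by simpa using bumpTab_top hA hstopA hI3A) (by omega)
            (by
              rw [bumpTab_colLen_eq hstopA]
              exact le_trans (hA.len c) (by omega))
            (by
              simp only [Nat.add_sub_cancel]
              rw [bumpTab_colLen_eq hstopA]
              omega)
            k
            (by
              have he : colL B k = colL (heckeGo f (bumpTab A c v) (c+1) (bumpOut A c v)).1 k :=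
                hag k (by omega)
              unfold colLen at hk2 ⊢
              rw [← he]
              exact hk2)
          exact hge
      · -- Both runs bump; recurse.
        rw [heckeGo_bump hstopB]
        obtain ⟨hy2mem, hy2lt⟩ := bump_ex hstopB
        obtain ⟨r2, hr2, hy2ent⟩ := mem_colL_iff.mp hy2mem
        have hcB' : c < B.length := colLen_pos_lt (by omega)
        -- the value bumped out by run 2 is at most the one bumped out by run 1
        have hkey : bumpOut B c u ≤ bumpOut A c v := by
          have he : ent B c r2 = ent (bumpTab A c v) c r2 := by
            unfold ent; rw [hBc]
          rcases bumpTab_ent hA hstopA hry hyent r2 with hsame | ⟨-, hrepl⟩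
          · -- entry of B at (c, r2) is an original entry of A, smaller than v
            have hmemA : ent A c r2 ∈ colL A c :=
              mem_colL_iff.mpr ⟨r2, by omega, rfl⟩
            have h7 := bump_max (x := v) hmemA (by omega)
            omega
          · -- entry of B at (c, r2) is v itself: impossible since it is < u ≤ v
            omega
        apply big2 f g (bumpTab A c v) (bumpTab B c u) (c+1) (bumpOut A c v) (bumpOut B c u)
          (bumpTab_isDecTab hA) (bumpTab_isDecTab hB)
          (by rw [bumpTab_length]; omega) (by rw [bumpTab_length]; omega)
          (by rw [bumpTab_length]; omega) (by rw [bumpTab_length]; omega)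
          ?_ hI3A' ?_ hkey
        · intro j hj
          rw [bumpTab_colL_ne hstopB (by omega)]
          exact hag j (by omega)
        · exact Or.inr (by simpa using bumpTab_top hB hstopB hI3B)
/-- **Pieri property of Hecke insertion.**  If `x₁` is Hecke-inserted into a
decreasing tableau `T` ending at box `c₁`, and then `x₂` is Hecke-inserted into the
result ending at box `c₂`, then `c₂` is strictly to the right of `c₁` if and only
if `x₁ < x₂`. -/
theorem stmt16 (T : List (List ℕ)) (hT : IsDecTab T) (x₁ x₂ : ℕ) :
    (heckeInsert T x₁).2.1 < (heckeInsert (heckeInsert T x₁).1 x₂).2.1 ↔ x₁ < x₂ := by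
  unfold heckeInsert
  set B := (heckeGo (T.length + 2) T 0 x₁).1 with hBdef
  have hB : IsDecTab B := heckeGo_isDecTab _ _ _ _ hT
  constructor
  · intro h
    by_contra hcon
    push_neg at hcon
    have h2 := big2 (T.length + 2) (B.length + 2) T B 0 x₁ x₂ hT hB
      (by omega) (by omega) (by omega) (by omega)
      (fun j _ => rfl) (Or.inl rfl) (Or.inl rfl) hcon
    omega
  · intro h
    have h2 := big1 (T.length + 2) (B.length + 2) T B 0 x₁ x₂ hT hB
      (by omega) (by omega) (by omega) (by omega)
      (fun j _ => rfl) (Or.inl rfl) (Or.inl rfl) (Or.inl rfl) h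
    exact h2

end
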